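/- arXiv:0902.0807 — 2 statements merged into one kernel-verified Lean document; each statement's English description precedes it below -/
import Mathlib

section
/- Let d ≥ 6 and let I ⊆ ℝ be an interval. There exists a constant C = C(d) such that for every measurable v : I × ℝ^d → ℂ, with Ω := {(t,x) ∈ I × ℝ^d : |v(t,x)| > W(x)/4}, one has ‖ |∇W| · |v|^{p_c−1} ‖_{L^2_t L^{2d/(d+2)}_x(Ω)} ≤ C ‖v‖_{L^{q₀}_t L^{r₀}_x(I×ℝ^d)}^{(2d+3)/(2(d−2))}, where q₀ = (2d+3)/(d−2) and r₀ = 2d(2d+3)/((d−2)(2d−1)). -/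
open MeasureTheory
open scoped ENNReal

noncomputable section

/-- ℝ^d as Euclidean space -/
abbrev Euc (d : ℕ) := EuclideanSpace ℝ (Fin d)

/-- The ground state W(x) = (1 + |x|²/(d(d−2)))^{−(d−2)/2}. -/
def Wgs (d : ℕ) (x : Euc d) : ℝ :=
  (1 + ‖x‖ ^ 2 / ((d : ℝ) * ((d : ℝ) - 2))) ^ (-(((d : ℝ) - 2) / 2))

/-- p_c = (d+2)/(d-2) -/
def pc (d : ℕ) : ℝ := ((d : ℝ) + 2) / ((d : ℝ) - 2)

/-- Mixed norm ‖F‖_{L^q_t L^r_x(Ω)} = (∫_I (∫_{ℝ^d} |F(t,x)|^r 1_Ω(t,x) dx)^{q/r} dt)^{1/q}. -/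
def mixNorm (d : ℕ) (q r : ℝ) (I : Set ℝ) (Ω : Set (ℝ × Euc d))
    (F : ℝ × Euc d → ℝ) : ℝ≥0∞ :=
  (∫⁻ t in I,
      (∫⁻ x, Ω.indicator (fun p => ENNReal.ofReal (|F p| ^ r)) (t, x)) ^ (q / r)) ^ (1 / q)

/-- time exponent q₀ = (2d+3)/(d−2) -/
def q0 (d : ℕ) : ℝ := (2 * (d : ℝ) + 3) / ((d : ℝ) - 2)

/-- space exponent r₀ = 2d(2d+3)/((d−2)(2d−1)) -/
def r0 (d : ℕ) : ℝ := 2 * (d : ℝ) * (2 * (d : ℝ) + 3) / (((d : ℝ) - 2) * (2 * (d : ℝ) - 1))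

-- gradient bound
lemma aux_fderiv_bound (d : ℕ) (hd : 6 ≤ d) (x : Euc d) :
    ‖fderiv ℝ (Wgs d) x‖ ≤
      (((d : ℝ) - 2) / Real.sqrt ((d : ℝ) * ((d : ℝ) - 2))) *
        (1 + ‖x‖ ^ 2 / ((d : ℝ) * ((d : ℝ) - 2))) ^ (-(((d : ℝ) - 1) / 2)) := by
  have hk : (6 : ℝ) ≤ (d : ℝ) := by exact_mod_cast hd
  set k : ℝ := (d : ℝ) with hkdef
  have hk2 : (0 : ℝ) < k - 2 := by linarith
  have hkpos : (0 : ℝ) < k := by linarith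
  set K : ℝ := k * (k - 2) with hKdef
  have hK : 0 < K := mul_pos hkpos hk2
  have hsK : 0 < Real.sqrt K := Real.sqrt_pos.mpr hK
  set g : ℝ := 1 + ‖x‖ ^ 2 / K with hgdef
  have hgpos : 0 < g := by
    have : 0 ≤ ‖x‖ ^ 2 / K := div_nonneg (sq_nonneg _) hK.le
    rw [hgdef]; linarith
  set c : ℝ := -((k - 2) / 2) with hcdef
  have h1 : HasFDerivAt (fun y : Euc d => K⁻¹ * ‖y‖ ^ 2)
      (K⁻¹ • ((2 : ℕ) • innerSL ℝ x)) x :=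
    (hasStrictFDerivAt_norm_sq x).hasFDerivAt.const_mul K⁻¹
  have h2 : HasFDerivAt (fun y : Euc d => 1 + ‖y‖ ^ 2 / K)
      (K⁻¹ • ((2 : ℕ) • innerSL ℝ x)) x := by
    simpa [div_eq_inv_mul] using h1.const_add 1
  have h3 : HasDerivAt (fun y : ℝ => y ^ c) (c * g ^ (c - 1)) g :=
    Real.hasDerivAt_rpow_const (Or.inl hgpos.ne')
  have h4 : HasFDerivAt (Wgs d)
      ((c * g ^ (c - 1)) • (K⁻¹ • ((2 : ℕ) • innerSL ℝ x))) x := by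
    have := h3.comp_hasFDerivAt x h2
    exact this
  rw [h4.fderiv]
  have h5 : ‖(2 : ℕ) • innerSL ℝ x‖ = 2 * ‖x‖ := by
    rw [← Nat.cast_smul_eq_nsmul ℝ, norm_smul, innerSL_apply_norm]
    norm_num
  rw [norm_smul, norm_smul, h5]
  have hgc1 : (0:ℝ) ≤ g ^ (c - 1) := (Real.rpow_pos_of_pos hgpos _).le
  have habs : |c * g ^ (c - 1)| = (k - 2) / 2 * g ^ (c - 1) := by
    rw [abs_mul, abs_of_nonneg hgc1, hcdef, abs_neg, abs_of_nonneg (by linarith : (0:ℝ) ≤ (k-2)/2)]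
  have hx2 : ‖x‖ ≤ Real.sqrt K * g ^ ((1:ℝ)/2) := by
    have h6 : ‖x‖ ^ 2 ≤ K * g := by
      rw [hgdef, mul_add, mul_one, mul_div_cancel₀ _ hK.ne']
      nlinarith [sq_nonneg ‖x‖]
    have h7 : ‖x‖ ≤ Real.sqrt (K * g) := by
      rw [← Real.sqrt_sq (norm_nonneg x)]
      exact Real.sqrt_le_sqrt h6
    calc ‖x‖ ≤ Real.sqrt (K * g) := h7
      _ = Real.sqrt K * g ^ ((1:ℝ)/2) := by
          rw [Real.sqrt_mul hK.le, Real.sqrt_eq_rpow g]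
  rw [Real.norm_eq_abs, Real.norm_eq_abs, habs, abs_of_nonneg (inv_nonneg.mpr hK.le)]
  calc (k - 2) / 2 * g ^ (c - 1) * (K⁻¹ * (2 * ‖x‖))
      = (k - 2) * K⁻¹ * g ^ (c - 1) * ‖x‖ := by ring
    _ ≤ (k - 2) * K⁻¹ * g ^ (c - 1) * (Real.sqrt K * g ^ ((1:ℝ)/2)) := by
        apply mul_le_mul_of_nonneg_left hx2
        positivity
    _ = (k - 2) / Real.sqrt K * g ^ (-((k - 1) / 2)) := by
        have hKs : Real.sqrt K * Real.sqrt K = K := Real.mul_self_sqrt hK.le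
        have h8 : g ^ (c - 1) * g ^ ((1:ℝ)/2) = g ^ (-((k - 1) / 2)) := by
          rw [← Real.rpow_add hgpos]
          congr 1
          rw [hcdef]; ring
        calc (k - 2) * K⁻¹ * g ^ (c - 1) * (Real.sqrt K * g ^ ((1:ℝ)/2))
            = (k - 2) * K⁻¹ * Real.sqrt K * (g ^ (c - 1) * g ^ ((1:ℝ)/2)) := by ring
          _ = (k - 2) / Real.sqrt K * g ^ (-((k - 1) / 2)) := by
              rw [h8]
              congr 1
              field_simp
              nlinarith [hKs]

lemma aux_finite (d : ℕ) (hd : 6 ≤ d) {s : ℝ} (hs : (d : ℝ) < 2 * s) (hs0 : 0 < s) :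
    ∫⁻ x : Euc d, ENNReal.ofReal ((1 + ‖x‖ ^ 2 / ((d : ℝ) * ((d : ℝ) - 2))) ^ (-s)) < ∞ := by
  have hk : (6 : ℝ) ≤ (d : ℝ) := by exact_mod_cast hd
  set k : ℝ := (d : ℝ) with hkdef
  set K : ℝ := k * (k - 2) with hKdef
  have hK : 0 < K := by
    have : (0:ℝ) < k - 2 := by linarith
    exact mul_pos (by linarith) this
  set M : ℝ := 2 * max K 1 with hMdef
  have hM : 0 < M := by positivity
  have hpt : ∀ x : Euc d,
      ENNReal.ofReal ((1 + ‖x‖ ^ 2 / K) ^ (-s)) ≤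
        ENNReal.ofReal (M ^ s) * ENNReal.ofReal ((1 + ‖x‖) ^ (-(2 * s))) := by
    intro x
    set n : ℝ := ‖x‖ with hndef
    have hn : 0 ≤ n := norm_nonneg x
    have hgpos : 0 < 1 + n ^ 2 / K := by positivity
    have hP : (0:ℝ) < M⁻¹ * (1 + n) ^ 2 := by positivity
    have hPg : M⁻¹ * (1 + n) ^ 2 ≤ 1 + n ^ 2 / K := by
      rw [inv_mul_le_iff₀ hM]
      have h1 : (1 + n) ^ 2 ≤ 2 * (1 + n ^ 2) := by nlinarith [sq_nonneg (1 - n)]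
      have h2 : 1 + n ^ 2 ≤ max K 1 * (1 + n ^ 2 / K) := by
        have e1 : (1:ℝ) ≤ max K 1 * 1 := by
          simpa using le_max_right K 1
        have e2 : n ^ 2 ≤ max K 1 * (n ^ 2 / K) := by
          calc n ^ 2 = K * (n ^ 2 / K) := by field_simp
            _ ≤ max K 1 * (n ^ 2 / K) :=
                mul_le_mul_of_nonneg_right (le_max_left K 1) (by positivity)
        calc 1 + n ^ 2 ≤ max K 1 * 1 + max K 1 * (n ^ 2 / K) := add_le_add e1 e2
          _ = max K 1 * (1 + n ^ 2 / K) := by ring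
      calc (1 + n) ^ 2 ≤ 2 * (1 + n ^ 2) := h1
        _ ≤ 2 * (max K 1 * (1 + n ^ 2 / K)) := by
            have := mul_le_mul_of_nonneg_left h2 (by norm_num : (0:ℝ) ≤ 2)
            linarith
        _ = M * (1 + n ^ 2 / K) := by rw [hMdef]; ring
    have hle : (1 + n ^ 2 / K) ^ (-s) ≤ (M⁻¹ * (1 + n) ^ 2) ^ (-s) :=
      (Real.rpow_le_rpow_iff_of_neg hgpos hP (by linarith)).mpr hPg
    have heq : (M⁻¹ * (1 + n) ^ 2) ^ (-s) = M ^ s * (1 + n) ^ (-(2 * s)) := by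
      rw [Real.mul_rpow (by positivity) (by positivity)]
      congr 1
      · rw [Real.inv_rpow hM.le, Real.rpow_neg hM.le, inv_inv]
      · rw [← Real.rpow_natCast (1 + n) 2, ← Real.rpow_mul (by linarith)]
        congr 1; ring
    calc ENNReal.ofReal ((1 + n ^ 2 / K) ^ (-s)) ≤
        ENNReal.ofReal (M ^ s * (1 + n) ^ (-(2 * s))) := by
          apply ENNReal.ofReal_le_ofReal
          rw [← heq]; exact hle
      _ = ENNReal.ofReal (M ^ s) * ENNReal.ofReal ((1 + n) ^ (-(2 * s))) :=
          ENNReal.ofReal_mul (by positivity)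
  calc ∫⁻ x : Euc d, ENNReal.ofReal ((1 + ‖x‖ ^ 2 / K) ^ (-s)) ≤
      ∫⁻ x : Euc d, ENNReal.ofReal (M ^ s) * ENNReal.ofReal ((1 + ‖x‖) ^ (-(2 * s))) :=
        lintegral_mono hpt
    _ = ENNReal.ofReal (M ^ s) * ∫⁻ x : Euc d, ENNReal.ofReal ((1 + ‖x‖) ^ (-(2 * s))) :=
        lintegral_const_mul' _ _ ENNReal.ofReal_ne_top
    _ < ∞ := by
        apply ENNReal.mul_lt_top ENNReal.ofReal_lt_top
        apply finite_integral_one_add_norm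
        rw [finrank_euclideanSpace_fin]
        exact hs

/-- on Ω = {|v| > W/4},
‖|∇W||v|^{p_c−1}‖_{L²_t L^{2d/(d+2)}_x(Ω)} ≤ C ‖v‖_{L^{q₀}_t L^{r₀}_x}^{(2d+3)/(2(d−2))}. -/
theorem gradW_v_large_regime (d : ℕ) (hd : 6 ≤ d) (I : Set ℝ) (hI : I.OrdConnected) :
    ∃ C : ℝ, 0 < C ∧ ∀ v : ℝ × Euc d → ℂ, Measurable v →
      mixNorm d 2 (2 * (d : ℝ) / ((d : ℝ) + 2)) I
          {p : ℝ × Euc d | p.1 ∈ I ∧ Wgs d p.2 / 4 < ‖v p‖}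
          (fun p => ‖fderiv ℝ (Wgs d) p.2‖ * ‖v p‖ ^ (pc d - 1)) ≤
        ENNReal.ofReal C *
          (mixNorm d (q0 d) (r0 d) I Set.univ (fun p => ‖v p‖)) ^
            ((2 * (d : ℝ) + 3) / (2 * ((d : ℝ) - 2))) := by
  have hk : (6 : ℝ) ≤ (d : ℝ) := by exact_mod_cast hd
  have hk2 : (0 : ℝ) < (d : ℝ) - 2 := by linarith
  have hkp : (0 : ℝ) < (d : ℝ) := by linarith
  have hkp2 : (0 : ℝ) < (d : ℝ) + 2 := by linarith
  have h2k1 : (0 : ℝ) < 2 * (d : ℝ) - 1 := by linarith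
  have hK : (0 : ℝ) < (d : ℝ) * ((d : ℝ) - 2) := mul_pos hkp hk2
  set g : Euc d → ℝ := fun x => 1 + ‖x‖ ^ 2 / ((d : ℝ) * ((d : ℝ) - 2)) with hgdef
  have hg : ∀ x, 0 < g x := fun x => by
    have : 0 ≤ ‖x‖ ^ 2 / ((d : ℝ) * ((d : ℝ) - 2)) := by positivity
    simp only [hgdef]; linarith
  set r : ℝ := 2 * (d : ℝ) / ((d : ℝ) + 2) with hrdef
  have hr : 0 < r := by rw [hrdef]; exact div_pos (by linarith) (by linarith)
  set β : ℝ := (2 * (d : ℝ) + 3) / (2 * ((d : ℝ) - 2)) with hβdef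
  have hβ : 0 < β := by rw [hβdef]; exact div_pos (by linarith) (by linarith)
  set a : ℝ := (2 * (d : ℝ) - 5) / (2 * ((d : ℝ) - 2)) with hadef
  have ha : 0 ≤ a := by rw [hadef]; exact div_nonneg (by linarith) (by linarith)
  set p' : ℝ := 2 * ((d : ℝ) + 2) / 5 with hp'def
  set q' : ℝ := 2 * ((d : ℝ) + 2) / (2 * (d : ℝ) - 1) with hq'def
  have hp'pos : 0 < p' := by rw [hp'def]; exact div_pos (by linarith) (by linarith)
  have hq'pos : 0 < q' := by rw [hq'def]; exact div_pos (by linarith) (by linarith)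
  have hconj : Real.HolderConjugate p' q' := by
    rw [Real.holderConjugate_iff]
    constructor
    · rw [hp'def]; nlinarith
    · rw [hp'def, hq'def]; field_simp; ring
  set C1 : ℝ := ((d : ℝ) - 2) / Real.sqrt ((d : ℝ) * ((d : ℝ) - 2)) with hC1def
  have hC1 : 0 ≤ C1 := div_nonneg (by linarith) (Real.sqrt_nonneg _)
  set C2 : ℝ := C1 * 4 ^ a with hC2def
  have hC2 : 0 ≤ C2 := mul_nonneg hC1 (Real.rpow_nonneg (by norm_num) _)
  set A : ℝ≥0∞ := ∫⁻ x : Euc d, ENNReal.ofReal (g x ^ (-(3 * (d : ℝ) / 5))) with hAdef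
  have hA : A ≠ ⊤ := by
    rw [hAdef]
    exact (aux_finite d hd (by linarith) (by linarith)).ne
  set Dc : ℝ≥0∞ := ENNReal.ofReal (C2 ^ r) * A ^ (1 / p') with hDcdef
  have hDc : Dc ≠ ⊤ :=
    ENNReal.mul_ne_top ENNReal.ofReal_ne_top (ENNReal.rpow_ne_top_of_nonneg (one_div_nonneg.mpr hp'pos.le) hA)
  set Ec : ℝ≥0∞ := (Dc ^ (2 / r)) ^ ((1 : ℝ) / 2) with hEcdef
  have hEc : Ec ≠ ⊤ :=
    ENNReal.rpow_ne_top_of_nonneg (by norm_num)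
      (ENNReal.rpow_ne_top_of_nonneg (div_nonneg (by norm_num) hr.le) hDc)
  refine ⟨Ec.toReal + 1, by positivity, ?_⟩
  intro v hv
  -- local notation
  set φ : Euc d → ℝ≥0∞ := fun x => ENNReal.ofReal (g x ^ ((-(3 / 4 : ℝ)) * r)) with hφdef
  set ψ : ℝ → Euc d → ℝ≥0∞ :=
    fun t x => ENNReal.ofReal (‖v (t, x)‖ ^ (β * r)) with hψdef
  set B : ℝ → ℝ≥0∞ := fun t => ∫⁻ x : Euc d, ENNReal.ofReal (‖v (t, x)‖ ^ (r0 d)) with hBdef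
  have hgc : Continuous g := by
    simp only [hgdef]
    exact continuous_const.add ((continuous_norm.pow 2).div_const _)
  have hφm : Measurable φ :=
    ENNReal.measurable_ofReal.comp (hgc.measurable.pow measurable_const)
  have hψm : ∀ t, Measurable (ψ t) := fun t =>
    ENNReal.measurable_ofReal.comp
      (((hv.comp measurable_prodMk_left).norm).pow measurable_const)
  -- the pointwise bound
  have main2 : ∀ t (x : Euc d),
      ({p : ℝ × Euc d | p.1 ∈ I ∧ Wgs d p.2 / 4 < ‖v p‖}).indicator
          (fun p => ENNReal.ofReal
            (|‖fderiv ℝ (Wgs d) p.2‖ * ‖v p‖ ^ (pc d - 1)| ^ r)) (t, x) ≤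
        ENNReal.ofReal (C2 ^ r) * (φ x * ψ t x) := by
    intro t x
    by_cases hmem : (t, x) ∈ {p : ℝ × Euc d | p.1 ∈ I ∧ Wgs d p.2 / 4 < ‖v p‖}
    swap
    · rw [Set.indicator_of_notMem hmem]; exact zero_le
    rw [Set.indicator_of_mem hmem]
    obtain ⟨-, hvx⟩ := hmem
    set V : ℝ := ‖v (t, x)‖ with hVdef
    have hWeq : Wgs d x = g x ^ (-(((d : ℝ) - 2) / 2)) := rfl
    have hWp : 0 < Wgs d x := by rw [hWeq]; exact Real.rpow_pos_of_pos (hg x) _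
    have hVpos : 0 < V := lt_trans (div_pos hWp (by norm_num)) hvx
    have hVnn : 0 ≤ V := hVpos.le
    -- real chain
    have h2 : g x ^ (-(((d : ℝ) - 1) / 2)) = g x ^ (-(3 / 4 : ℝ)) * Wgs d x ^ a := by
      rw [hWeq, ← Real.rpow_mul (hg x).le, ← Real.rpow_add (hg x)]
      congr 1
      rw [hadef]
      field_simp
      ring
    have h3 : Wgs d x ^ a ≤ (4 * V) ^ a :=
      Real.rpow_le_rpow hWp.le (by linarith) ha
    have h4 : (4 * V) ^ a = 4 ^ a * V ^ a := Real.mul_rpow (by norm_num) hVnn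
    have h5 : V ^ a * V ^ (pc d - 1) = V ^ β := by
      rw [← Real.rpow_add hVpos]
      congr 1
      rw [hadef, hβdef, pc]
      field_simp
      ring
    have hFle : ‖fderiv ℝ (Wgs d) x‖ * V ^ (pc d - 1) ≤
        C2 * (g x ^ (-(3 / 4 : ℝ)) * V ^ β) := by
      calc ‖fderiv ℝ (Wgs d) x‖ * V ^ (pc d - 1)
          ≤ C1 * g x ^ (-(((d : ℝ) - 1) / 2)) * V ^ (pc d - 1) :=
            mul_le_mul_of_nonneg_right (aux_fderiv_bound d hd x) (Real.rpow_nonneg hVnn _)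
        _ = C1 * (g x ^ (-(3 / 4 : ℝ)) * Wgs d x ^ a) * V ^ (pc d - 1) := by rw [h2]
        _ ≤ C1 * (g x ^ (-(3 / 4 : ℝ)) * (4 ^ a * V ^ a)) * V ^ (pc d - 1) := by
            have hgx : 0 ≤ g x ^ (-(3 / 4 : ℝ)) := (Real.rpow_pos_of_pos (hg x) _).le
            have := h3.trans_eq h4
            gcongr
        _ = C2 * (g x ^ (-(3 / 4 : ℝ)) * (V ^ a * V ^ (pc d - 1))) := by
            rw [hC2def]; ring
        _ = C2 * (g x ^ (-(3 / 4 : ℝ)) * V ^ β) := by rw [h5]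
    have habs : |‖fderiv ℝ (Wgs d) x‖ * V ^ (pc d - 1)| =
        ‖fderiv ℝ (Wgs d) x‖ * V ^ (pc d - 1) :=
      abs_of_nonneg (mul_nonneg (norm_nonneg _) (Real.rpow_nonneg hVnn _))
    have hexp : (C2 * (g x ^ (-(3 / 4 : ℝ)) * V ^ β)) ^ r =
        C2 ^ r * (g x ^ ((-(3 / 4 : ℝ)) * r) * V ^ (β * r)) := by
      rw [Real.mul_rpow hC2 (mul_nonneg (Real.rpow_nonneg (hg x).le _) (Real.rpow_nonneg hVnn _)),
        Real.mul_rpow (Real.rpow_nonneg (hg x).le _) (Real.rpow_nonneg hVnn _),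
        ← Real.rpow_mul (hg x).le, ← Real.rpow_mul hVnn]
    calc ENNReal.ofReal (|‖fderiv ℝ (Wgs d) x‖ * V ^ (pc d - 1)| ^ r)
        ≤ ENNReal.ofReal ((C2 * (g x ^ (-(3 / 4 : ℝ)) * V ^ β)) ^ r) := by
          apply ENNReal.ofReal_le_ofReal
          apply Real.rpow_le_rpow (abs_nonneg _) _ hr.le
          rw [habs]; exact hFle
      _ = ENNReal.ofReal (C2 ^ r) * (φ x * ψ t x) := by
          rw [hexp, ENNReal.ofReal_mul (Real.rpow_nonneg hC2 _),
            ENNReal.ofReal_mul (Real.rpow_nonneg (hg x).le _)]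
  -- Hölder per time slice
  have key : ∀ t : ℝ,
      (∫⁻ x : Euc d, ({p : ℝ × Euc d | p.1 ∈ I ∧ Wgs d p.2 / 4 < ‖v p‖}).indicator
          (fun p => ENNReal.ofReal
            (|‖fderiv ℝ (Wgs d) p.2‖ * ‖v p‖ ^ (pc d - 1)| ^ r)) (t, x)) ≤
        Dc * (B t) ^ (1 / q') := by
    intro t
    have hφp : ∀ x : Euc d, φ x ^ p' = ENNReal.ofReal (g x ^ (-(3 * (d : ℝ) / 5))) := by
      intro x
      rw [hφdef]
      rw [ENNReal.ofReal_rpow_of_nonneg (Real.rpow_nonneg (hg x).le _) hp'pos.le,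
        ← Real.rpow_mul (hg x).le]
      congr 2
      rw [hrdef, hp'def]
      field_simp
      ring
    have hψq : ∀ x : Euc d, ψ t x ^ q' = ENNReal.ofReal (‖v (t, x)‖ ^ (r0 d)) := by
      intro x
      rw [hψdef]
      rw [ENNReal.ofReal_rpow_of_nonneg (Real.rpow_nonneg (norm_nonneg _) _) hq'pos.le,
        ← Real.rpow_mul (norm_nonneg _)]
      congr 2
      rw [hβdef, hrdef, hq'def, r0]
      field_simp
    calc (∫⁻ x : Euc d, ({p : ℝ × Euc d | p.1 ∈ I ∧ Wgs d p.2 / 4 < ‖v p‖}).indicator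
          (fun p => ENNReal.ofReal
            (|‖fderiv ℝ (Wgs d) p.2‖ * ‖v p‖ ^ (pc d - 1)| ^ r)) (t, x))
        ≤ ∫⁻ x : Euc d, ENNReal.ofReal (C2 ^ r) * (φ x * ψ t x) :=
          lintegral_mono (main2 t)
      _ = ENNReal.ofReal (C2 ^ r) * ∫⁻ x : Euc d, φ x * ψ t x :=
          lintegral_const_mul' _ _ ENNReal.ofReal_ne_top
      _ ≤ ENNReal.ofReal (C2 ^ r) *
            ((∫⁻ x : Euc d, φ x ^ p') ^ (1 / p') * (∫⁻ x : Euc d, ψ t x ^ q') ^ (1 / q')) := by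
          apply mul_le_mul_right
          exact ENNReal.lintegral_mul_le_Lp_mul_Lq volume hconj hφm.aemeasurable
            (hψm t).aemeasurable
      _ = Dc * (B t) ^ (1 / q') := by
          simp only [hφp, hψq]
          rw [hDcdef, hBdef, hAdef, mul_assoc]
  -- outer estimate
  simp only [mixNorm]
  set X : ℝ≥0∞ := ∫⁻ t in I,
      (∫⁻ x, Set.indicator Set.univ
        (fun p : ℝ × Euc d => ENNReal.ofReal (|‖v p‖| ^ (r0 d))) (t, x)) ^ (q0 d / r0 d)
    with hXdef
  have hBX : ∀ t : ℝ, (∫⁻ x, Set.indicator Set.univ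
      (fun p : ℝ × Euc d => ENNReal.ofReal (|‖v p‖| ^ (r0 d))) (t, x)) = B t := by
    intro t
    simp [hBdef, Set.indicator_univ, abs_norm]
  have hq0r0 : (1 / q') * (2 / r) = q0 d / r0 d := by
    rw [hq'def, hrdef, q0, r0]
    field_simp
  have hhalf : (1 / q0 d) * β = 1 / 2 := by
    rw [q0, hβdef]
    field_simp
  calc (∫⁻ t in I, (∫⁻ x, ({p : ℝ × Euc d | p.1 ∈ I ∧ Wgs d p.2 / 4 < ‖v p‖}).indicator
          (fun p => ENNReal.ofReal
            (|‖fderiv ℝ (Wgs d) p.2‖ * ‖v p‖ ^ (pc d - 1)| ^ r)) (t, x)) ^ (2 / r)) ^ ((1:ℝ) / 2)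
      ≤ (∫⁻ t in I, (Dc * (B t) ^ (1 / q')) ^ (2 / r)) ^ ((1:ℝ) / 2) := by
        apply ENNReal.rpow_le_rpow _ (by norm_num)
        apply lintegral_mono
        intro t
        exact ENNReal.rpow_le_rpow (key t) (div_nonneg (by norm_num) hr.le)
    _ = (Dc ^ (2 / r) * ∫⁻ t in I, (B t) ^ ((1 / q') * (2 / r))) ^ ((1:ℝ) / 2) := by
        congr 1
        rw [← lintegral_const_mul' _ _
          (ENNReal.rpow_ne_top_of_nonneg (div_nonneg (by norm_num) hr.le) hDc)]
        congr 1
        funext t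
        rw [ENNReal.mul_rpow_of_nonneg _ _ (div_nonneg (by norm_num) hr.le), ← ENNReal.rpow_mul]
    _ = Ec * (∫⁻ t in I, (B t) ^ ((1 / q') * (2 / r))) ^ ((1:ℝ) / 2) := by
        rw [ENNReal.mul_rpow_of_nonneg _ _ (by norm_num), hEcdef]
    _ = Ec * (X ^ (1 / q0 d)) ^ β := by
        rw [hXdef]
        congr 1
        rw [← ENNReal.rpow_mul, hhalf]
        congr 1
        apply lintegral_congr
        intro t
        rw [hBX, hq0r0]
    _ ≤ ENNReal.ofReal (Ec.toReal + 1) * (X ^ (1 / q0 d)) ^ β := by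
        apply mul_le_mul_left
        conv_lhs => rw [← ENNReal.ofReal_toReal hEc]
        exact ENNReal.ofReal_le_ofReal (by linarith)
end
end

section
/- Let d ≥ 6 and let I ⊆ ℝ be an interval. There exists a constant C = C(d) such that for every measurable v : I × ℝ^d → ℂ, with Ω := {(t,x) ∈ I × ℝ^d : |v(t,x)| > W(x)/4}, one has ‖ W^{p_c−2} |∇W| · |v| ‖_{L^2_t L^{2d/(d+2)}_x(Ω)} ≤ C ‖v‖_{L^{q₀}_t L^{r₀}_x(I×ℝ^d)}^{(2d+3)/(2(d−2))}, where q₀ = (2d+3)/(d−2) and r₀ = 2d(2d+3)/((d−2)(2d−1)). -/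
open MeasureTheory
open scoped ENNReal

noncomputable section

variable {d : ℕ}

lemma norm_fderiv_Wgs_le (hd : 6 ≤ d) (x : Euc d) :
    ‖fderiv ℝ (Wgs d) x‖ ≤ ((d:ℝ)-2) * ((d:ℝ)*((d:ℝ)-2))⁻¹ * ‖x‖ *
      (1 + ‖x‖^2 / ((d:ℝ)*((d:ℝ)-2))) ^ ((-(((d:ℝ)-2)/2)) - 1) := by
  have hD : (6:ℝ) ≤ d := by exact_mod_cast hd
  set c : ℝ := (d:ℝ)*((d:ℝ)-2) with hc
  have hcpos : 0 < c := by
    have h1 : (0:ℝ) < d := by linarith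
    have h2 : (0:ℝ) < (d:ℝ) - 2 := by linarith
    positivity
  have hupos : 0 < 1 + ‖x‖^2 / c := by positivity
  have hn : HasFDerivAt (fun y : Euc d => ‖y‖^2) (2 • innerSL ℝ x) x :=
    (hasStrictFDerivAt_norm_sq x).hasFDerivAt
  have hu : HasFDerivAt (fun y : Euc d => 1 + ‖y‖^2 / c) (c⁻¹ • (2 • innerSL ℝ x)) x := by
    have heq : (fun y : Euc d => 1 + ‖y‖^2 / c) = (fun y : Euc d => 1 + c⁻¹ • ‖y‖^2) := by
      funext y; simp [smul_eq_mul]; ring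
    rw [heq]
    exact (hn.const_smul c⁻¹).const_add 1
  have hW : HasFDerivAt (Wgs d)
      (((-(((d:ℝ)-2)/2)) * (1 + ‖x‖^2 / c) ^ ((-(((d:ℝ)-2)/2)) - 1)) •
        (c⁻¹ • (2 • innerSL ℝ x))) x := hu.rpow_const (Or.inl (ne_of_gt hupos))
  rw [hW.fderiv, norm_smul, norm_smul]
  have h1 : ‖(2:ℕ) • innerSL ℝ x‖ ≤ 2 * ‖x‖ := by
    have : ‖(2:ℕ) • innerSL ℝ x‖ ≤ ((2:ℕ):ℝ) * ‖innerSL ℝ x‖ := norm_nsmul_le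
    rw [innerSL_apply_norm] at this
    simpa using this
  have hk : 0 < (d:ℝ) - 2 := by linarith
  have hup : 0 < (1 + ‖x‖^2/c) ^ ((-(((d:ℝ)-2)/2)) - 1) := Real.rpow_pos_of_pos hupos _
  have hnorm1 : ‖-(((d:ℝ)-2)/2) * (1 + ‖x‖^2/c) ^ ((-(((d:ℝ)-2)/2)) - 1)‖
      = (((d:ℝ)-2)/2) * (1 + ‖x‖^2/c) ^ ((-(((d:ℝ)-2)/2)) - 1) := by
    rw [Real.norm_eq_abs, abs_mul, abs_neg, abs_of_pos (by positivity : (0:ℝ) < ((d:ℝ)-2)/2),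
      abs_of_pos hup]
  rw [hnorm1, Real.norm_eq_abs, abs_of_pos (inv_pos.mpr hcpos)]
  calc ((d:ℝ)-2)/2 * (1 + ‖x‖^2/c) ^ ((-(((d:ℝ)-2)/2)) - 1) * (c⁻¹ * ‖(2:ℕ) • innerSL ℝ x‖)
      ≤ ((d:ℝ)-2)/2 * (1 + ‖x‖^2/c) ^ ((-(((d:ℝ)-2)/2)) - 1) * (c⁻¹ * (2*‖x‖)) := by
        apply mul_le_mul_of_nonneg_left (mul_le_mul_of_nonneg_left h1 (inv_pos.mpr hcpos).le)
        positivity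
    _ = ((d:ℝ)-2) * c⁻¹ * ‖x‖ * (1 + ‖x‖^2/c) ^ ((-(((d:ℝ)-2)/2)) - 1) := by ring

lemma Wgs_pos (hd : 6 ≤ d) (x : Euc d) : 0 < Wgs d x := by
  have hD : (6:ℝ) ≤ d := by exact_mod_cast hd
  have hcpos : (0:ℝ) < (d:ℝ)*((d:ℝ)-2) := by nlinarith
  exact Real.rpow_pos_of_pos (by positivity) _

lemma gpow_bound (hd : 6 ≤ d) : ∃ M : ℝ, 0 < M ∧ ∀ x : Euc d,
    ((4:ℝ) ^ (7/(2*((d:ℝ)-2))) *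
        ((Wgs d x) ^ (pc d - 2 - 7/(2*((d:ℝ)-2))) * ‖fderiv ℝ (Wgs d) x‖)) ^ (4*(d:ℝ)/5)
      ≤ M * (1 + ‖x‖) ^ (-(6*(d:ℝ)/5)) := by
  have hD : (6:ℝ) ≤ d := by exact_mod_cast hd
  set c : ℝ := (d:ℝ)*((d:ℝ)-2) with hc
  have hc2 : (2:ℝ) ≤ c := by nlinarith
  have hcpos : 0 < c := by linarith
  set α : ℝ := 7/(2*((d:ℝ)-2)) with hα
  set s : ℝ := 4*(d:ℝ)/5 with hs
  have hspos : 0 < s := by rw [hs]; positivity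
  set k : ℝ := ((d:ℝ)-2)/2 with hk
  have hd2 : (0:ℝ) < (d:ℝ) - 2 := by linarith
  have hM1pos : (0:ℝ) < (4:ℝ)^α * (((d:ℝ)-2) * c⁻¹) :=
    mul_pos (Real.rpow_pos_of_pos (by norm_num) _) (mul_pos hd2 (inv_pos.mpr hcpos))
  refine ⟨((4:ℝ)^α * (((d:ℝ)-2) * c⁻¹))^s * c^(s/2) * (2*c)^(3*(d:ℝ)/5), by positivity, fun x => ?_⟩
  set u : ℝ := 1 + ‖x‖^2 / c with hu
  have hupos : 0 < u := by rw [hu]; positivity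
  -- Wgs as rpow of u
  have hWeq : Wgs d x = u ^ (-k) := rfl
  have hWa : Wgs d x ^ (pc d - 2 - α) = u ^ ((-k) * (pc d - 2 - α)) := by
    rw [hWeq, ← Real.rpow_mul hupos.le]
  -- step I
  have hI : (4:ℝ)^α * ((Wgs d x) ^ (pc d - 2 - α) * ‖fderiv ℝ (Wgs d) x‖)
      ≤ ((4:ℝ)^α * (((d:ℝ)-2) * c⁻¹)) * (‖x‖ * u ^ (-(5/4 : ℝ))) := by
    have hf := norm_fderiv_Wgs_le hd x
    have hexp : (-k) * (pc d - 2 - α) + ((-k) - 1) = -(5/4 : ℝ) := by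
      rw [hk, hα]
      unfold pc
      have h2 : (d:ℝ) - 2 ≠ 0 := by linarith
      field_simp
      ring
    have hWapos : 0 < u ^ ((-k) * (pc d - 2 - α)) := Real.rpow_pos_of_pos hupos _
    calc (4:ℝ)^α * ((Wgs d x) ^ (pc d - 2 - α) * ‖fderiv ℝ (Wgs d) x‖)
        ≤ (4:ℝ)^α * (u ^ ((-k) * (pc d - 2 - α)) *
            (((d:ℝ)-2) * c⁻¹ * ‖x‖ * u ^ ((-k) - 1))) := by
          rw [hWa]
          apply mul_le_mul_of_nonneg_left _ (by positivity : (0:ℝ) ≤ (4:ℝ)^α)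
          apply mul_le_mul_of_nonneg_left _ hWapos.le
          exact hf
      _ = ((4:ℝ)^α * (((d:ℝ)-2) * c⁻¹)) * (‖x‖ * u ^ (-(5/4 : ℝ))) := by
          rw [← hexp, Real.rpow_add hupos]; ring
  -- step II: raise to s
  have hLnn : 0 ≤ (4:ℝ)^α * ((Wgs d x) ^ (pc d - 2 - α) * ‖fderiv ℝ (Wgs d) x‖) := by
    have : (0:ℝ) < Wgs d x ^ (pc d - 2 - α) := by
      rw [hWa]; exact Real.rpow_pos_of_pos hupos _
    positivity
  have hII : ((4:ℝ)^α * ((Wgs d x) ^ (pc d - 2 - α) * ‖fderiv ℝ (Wgs d) x‖)) ^ s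
      ≤ (((4:ℝ)^α * (((d:ℝ)-2) * c⁻¹)) * (‖x‖ * u ^ (-(5/4 : ℝ)))) ^ s :=
    Real.rpow_le_rpow hLnn hI hspos.le
  refine hII.trans ?_
  rw [Real.mul_rpow hM1pos.le (by positivity), Real.mul_rpow (norm_nonneg x) (by positivity)]
  -- remaining: ‖x‖^s * (u^{-5/4})^s ≤ c^{s/2} * (2c)^{3d/5} * (1+‖x‖)^{-(6d/5)}
  have h1 : (u ^ (-(5/4:ℝ))) ^ s = u ^ ((-(5/4:ℝ)) * s) := (Real.rpow_mul hupos.le _ _).symm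
  have hxs : ‖x‖ ^ s = (‖x‖^2) ^ (s/2) := by
    rw [← Real.rpow_natCast ‖x‖ 2, ← Real.rpow_mul (norm_nonneg x)]
    norm_num
    congr 1
    ring
  have hx2cu : ‖x‖^2 ≤ c * u := by
    rw [hu]
    have : c * (1 + ‖x‖^2/c) = c + ‖x‖^2 := by field_simp
    rw [this]; linarith
  have hxs2 : ‖x‖ ^ s ≤ c^(s/2) * u^(s/2) := by
    rw [hxs, ← Real.mul_rpow hcpos.le hupos.le]
    exact Real.rpow_le_rpow (by positivity) hx2cu (by positivity)
  have hupow : u^(s/2) * u^((-(5/4:ℝ))*s) = u ^ (-(3*(d:ℝ)/5)) := by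
    rw [← Real.rpow_add hupos]
    congr 1
    rw [hs]; ring
  have hub : (1+‖x‖)^2 / (2*c) ≤ u := by
    rw [hu, div_le_iff₀ (by linarith : (0:ℝ) < 2*c)]
    have h2 : (1 + ‖x‖^2/c) * (2*c) = 2*c + 2*‖x‖^2 := by field_simp
    rw [h2]
    nlinarith [sq_nonneg (‖x‖ - 1), norm_nonneg x]
  have hfin : u ^ (-(3*(d:ℝ)/5)) ≤ (2*c)^(3*(d:ℝ)/5) * (1+‖x‖) ^ (-(6*(d:ℝ)/5)) := by
    have hbpos : (0:ℝ) < (1+‖x‖)^2 / (2*c) := by positivity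
    have := Real.rpow_le_rpow_of_nonpos hbpos hub (by linarith : -(3*(d:ℝ)/5) ≤ 0)
    refine this.trans (le_of_eq ?_)
    rw [Real.div_rpow (by positivity) (by linarith : (0:ℝ) ≤ 2*c), div_eq_mul_inv,
      Real.rpow_neg (by linarith : (0:ℝ) ≤ 2*c), inv_inv,
      mul_comm (((1+‖x‖)^2) ^ (-(3*(d:ℝ)/5))) _]
    congr 1
    rw [← Real.rpow_natCast (1+‖x‖) 2, ← Real.rpow_mul (by positivity : (0:ℝ) ≤ 1+‖x‖)]
    norm_num
    ring_nf
  calc ((4:ℝ)^α * (((d:ℝ)-2) * c⁻¹)) ^ s * (‖x‖ ^ s * (u ^ (-(5/4:ℝ))) ^ s)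
      ≤ ((4:ℝ)^α * (((d:ℝ)-2) * c⁻¹)) ^ s * ((c^(s/2) * u^(s/2)) * u ^ ((-(5/4:ℝ))*s)) := by
        rw [h1]
        apply mul_le_mul_of_nonneg_left _ (by positivity)
        exact mul_le_mul_of_nonneg_right hxs2 (Real.rpow_pos_of_pos hupos _).le
    _ = ((4:ℝ)^α * (((d:ℝ)-2) * c⁻¹)) ^ s * c^(s/2) * (u^(s/2) * u^((-(5/4:ℝ))*s)) := by ring
    _ = ((4:ℝ)^α * (((d:ℝ)-2) * c⁻¹)) ^ s * c^(s/2) * u ^ (-(3*(d:ℝ)/5)) := by rw [hupow]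
    _ ≤ ((4:ℝ)^α * (((d:ℝ)-2) * c⁻¹)) ^ s * c^(s/2) *
          ((2*c)^(3*(d:ℝ)/5) * (1+‖x‖) ^ (-(6*(d:ℝ)/5))) := by
        exact mul_le_mul_of_nonneg_left hfin (by positivity)
    _ = ((4:ℝ)^α * (((d:ℝ)-2) * c⁻¹)) ^ s * c^(s/2) * (2*c)^(3*(d:ℝ)/5) *
          (1+‖x‖) ^ (-(6*(d:ℝ)/5)) := by ring

set_option maxHeartbeats 1000000 in
/-- on Ω = {|v| > W/4},
‖W^{p_c−2}|∇W||v|‖_{L²_t L^{2d/(d+2)}_x(Ω)} ≤ C ‖v‖_{L^{q₀}_t L^{r₀}_x}^{(2d+3)/(2(d−2))}. -/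
theorem Wpc2_gradW_v_large_regime (d : ℕ) (hd : 6 ≤ d) (I : Set ℝ) (hI : I.OrdConnected) :
    ∃ C : ℝ, 0 < C ∧ ∀ v : ℝ × Euc d → ℂ, Measurable v →
      mixNorm d 2 (2 * (d : ℝ) / ((d : ℝ) + 2)) I
          {p : ℝ × Euc d | p.1 ∈ I ∧ Wgs d p.2 / 4 < ‖v p‖}
          (fun p => (Wgs d p.2) ^ (pc d - 2) * ‖fderiv ℝ (Wgs d) p.2‖ * ‖v p‖) ≤
        ENNReal.ofReal C *
          (mixNorm d (q0 d) (r0 d) I Set.univ (fun p => ‖v p‖)) ^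
            ((2 * (d : ℝ) + 3) / (2 * ((d : ℝ) - 2))) := by
  have hD : (6:ℝ) ≤ d := by exact_mod_cast hd
  have hd2 : (0:ℝ) < (d:ℝ) - 2 := by linarith
  have hdpos : (0:ℝ) < d := by linarith
  have hd21 : (0:ℝ) < 2*(d:ℝ) - 1 := by linarith
  have hd23 : (0:ℝ) < 2*(d:ℝ) + 3 := by linarith
  have hdp2 : (0:ℝ) < (d:ℝ) + 2 := by linarith
  set α : ℝ := 7/(2*((d:ℝ)-2)) with hα
  set s : ℝ := 4*(d:ℝ)/5 with hs
  set r : ℝ := 2*(d:ℝ)/((d:ℝ)+2) with hr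
  have hrpos : 0 < r := by rw [hr]; positivity
  have hspos : 0 < s := by rw [hs]; positivity
  have hαpos : 0 < α := by rw [hα]; positivity
  have hr0pos : 0 < r0 d := by unfold r0; positivity
  have hq0pos : 0 < q0 d := by unfold q0; positivity
  set P : ℝ := s/r with hP
  set Q : ℝ := r0 d/((1+α)*r) with hQ
  have hPpos : 0 < P := by rw [hP]; positivity
  have h1α : 0 < 1 + α := by linarith
  have hQpos : 0 < Q := by rw [hQ]; positivity
  have hPval : P = 2*((d:ℝ)+2)/5 := by
    rw [hP, hs, hr]; field_simp [hdpos.ne', hdp2.ne']; ring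
  have hQval : Q = 2*((d:ℝ)+2)/(2*(d:ℝ)-1) := by
    rw [hQ, hα]; unfold r0
    rw [hr]
    field_simp [hdpos.ne', hdp2.ne', hd2.ne', hd21.ne', hd23.ne']
    ring
  have hPQ : Real.HolderConjugate P Q := by
    rw [Real.holderConjugate_iff]
    constructor
    · rw [hPval]; rw [lt_div_iff₀ (by norm_num : (0:ℝ) < 5)]; linarith
    · rw [hPval, hQval, inv_div, inv_div]
      rw [div_add_div _ _ (by positivity : (2*((d:ℝ)+2)) ≠ 0) (by positivity : (2*((d:ℝ)+2)) ≠ 0)]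
      field_simp
      ring
  set g : Euc d → ℝ := fun x => Wgs d x ^ (pc d - 2 - α) * ‖fderiv ℝ (Wgs d) x‖ with hg
  set G : ℝ≥0∞ := ∫⁻ x, ENNReal.ofReal (((4:ℝ)^α * g x) ^ s) with hG
  have hGfin : G ≠ ⊤ := by
    obtain ⟨M, hMpos, hgM⟩ := gpow_bound hd
    have h1 : G ≤ ∫⁻ x : Euc d, ENNReal.ofReal (M * (1+‖x‖) ^ (-(6*(d:ℝ)/5))) := by
      rw [hG]
      exact lintegral_mono fun x => ENNReal.ofReal_le_ofReal (hgM x)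
    have h2 : (∫⁻ x : Euc d, ENNReal.ofReal (M * (1+‖x‖) ^ (-(6*(d:ℝ)/5))))
        = ENNReal.ofReal M * ∫⁻ x : Euc d, ENNReal.ofReal ((1+‖x‖) ^ (-(6*(d:ℝ)/5))) := by
      rw [← lintegral_const_mul' _ _ ENNReal.ofReal_ne_top]
      congr 1; funext x
      rw [← ENNReal.ofReal_mul hMpos.le]
    have h3 : (∫⁻ x : Euc d, ENNReal.ofReal ((1+‖x‖) ^ (-(6*(d:ℝ)/5)))) < ⊤ := by
      apply finite_integral_one_add_norm
      rw [finrank_euclideanSpace_fin]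
      linarith
    exact ne_top_of_le_ne_top (by rw [h2]; exact ENNReal.mul_ne_top ENNReal.ofReal_ne_top h3.ne) h1
  set C : ℝ := (G ^ (1/s)).toReal + 1 with hC
  have hCpos : 0 < C := by
    rw [hC]; have := ENNReal.toReal_nonneg (a := G ^ (1/s)); linarith
  have hGC : G ^ (1/s) ≤ ENNReal.ofReal C := by
    have hne : G ^ (1/s) ≠ ⊤ := ENNReal.rpow_ne_top_of_nonneg (by positivity) hGfin
    rw [← ENNReal.ofReal_toReal hne]
    exact ENNReal.ofReal_le_ofReal (by rw [hC]; linarith)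
  refine ⟨C, hCpos, fun v hv => ?_⟩
  set Ω : Set (ℝ × Euc d) := {p : ℝ × Euc d | p.1 ∈ I ∧ Wgs d p.2 / 4 < ‖v p‖} with hΩ
  set B : ℝ → ℝ≥0∞ := fun t => ∫⁻ x : Euc d, ENNReal.ofReal (‖v (t,x)‖ ^ r0 d) with hB
  set X : ℝ≥0∞ := ∫⁻ t in I, B t ^ (q0 d / r0 d) with hX
  -- RHS mixNorm equals X ^ (1/q0)
  have hRHS : mixNorm d (q0 d) (r0 d) I Set.univ (fun p => ‖v p‖) = X ^ (1/(q0 d)) := by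
    unfold mixNorm
    rw [hX, hB]
    simp only [Set.indicator_univ, abs_norm]
  -- pointwise bound on the indicator
  have hpt : ∀ t x, Ω.indicator
      (fun p => ENNReal.ofReal (|Wgs d p.2 ^ (pc d - 2) * ‖fderiv ℝ (Wgs d) p.2‖ * ‖v p‖| ^ r))
        (t, x)
      ≤ ENNReal.ofReal (((4:ℝ)^α * g x) ^ r) *
          ENNReal.ofReal (‖v (t,x)‖ ^ ((1+α)*r)) := by
    intro t x
    by_cases hmem : (t,x) ∈ Ω
    · rw [Set.indicator_of_mem hmem]
      have hW : 0 < Wgs d x := Wgs_pos hd x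
      have hvW : Wgs d x / 4 < ‖v (t,x)‖ := hmem.2
      have hvpos : 0 < ‖v (t,x)‖ := lt_trans (by positivity) hvW
      have hgnn : 0 ≤ g x := by
        rw [hg]
        exact mul_nonneg (Real.rpow_pos_of_pos hW _).le (norm_nonneg _)
      have hann : (0:ℝ) ≤ (4:ℝ)^α * g x := mul_nonneg (by positivity) hgnn
      rw [← ENNReal.ofReal_mul (Real.rpow_nonneg hann _)]
      apply ENNReal.ofReal_le_ofReal
      have hFle : Wgs d x ^ (pc d - 2) * ‖fderiv ℝ (Wgs d) x‖ * ‖v (t,x)‖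
          ≤ ((4:ℝ)^α * g x) * ‖v (t,x)‖ ^ (1+α) := by
        have hsplit : Wgs d x ^ (pc d - 2) = Wgs d x ^ (pc d - 2 - α) * Wgs d x ^ α := by
          rw [← Real.rpow_add hW]; congr 1; ring
        have hWα : Wgs d x ^ α ≤ (4:ℝ)^α * ‖v (t,x)‖ ^ α := by
          rw [← Real.mul_rpow (by norm_num) hvpos.le]
          exact Real.rpow_le_rpow hW.le (by linarith) hαpos.le
        have hw1 : ‖v (t,x)‖ ^ α * ‖v (t,x)‖ = ‖v (t,x)‖ ^ (1+α) := by
          rw [add_comm, Real.rpow_add_one hvpos.ne']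
        calc Wgs d x ^ (pc d - 2) * ‖fderiv ℝ (Wgs d) x‖ * ‖v (t,x)‖
            = (Wgs d x ^ (pc d - 2 - α) * ‖fderiv ℝ (Wgs d) x‖ * ‖v (t,x)‖) * Wgs d x ^ α := by
              rw [hsplit]; ring
          _ ≤ (Wgs d x ^ (pc d - 2 - α) * ‖fderiv ℝ (Wgs d) x‖ * ‖v (t,x)‖) *
                ((4:ℝ)^α * ‖v (t,x)‖ ^ α) := by
              apply mul_le_mul_of_nonneg_left hWα
              exact mul_nonneg (mul_nonneg (Real.rpow_pos_of_pos hW _).le (norm_nonneg _))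
                (norm_nonneg _)
          _ = ((4:ℝ)^α * g x) * (‖v (t,x)‖ ^ α * ‖v (t,x)‖) := by rw [hg]; ring
          _ = ((4:ℝ)^α * g x) * ‖v (t,x)‖ ^ (1+α) := by rw [hw1]
      have habs : |Wgs d x ^ (pc d - 2) * ‖fderiv ℝ (Wgs d) x‖ * ‖v (t,x)‖|
          = Wgs d x ^ (pc d - 2) * ‖fderiv ℝ (Wgs d) x‖ * ‖v (t,x)‖ := by
        exact abs_of_nonneg (mul_nonneg (mul_nonneg (Real.rpow_pos_of_pos hW _).le
          (norm_nonneg _)) (norm_nonneg _))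
      rw [habs]
      calc (Wgs d x ^ (pc d - 2) * ‖fderiv ℝ (Wgs d) x‖ * ‖v (t,x)‖) ^ r
          ≤ (((4:ℝ)^α * g x) * ‖v (t,x)‖ ^ (1+α)) ^ r := by
            exact Real.rpow_le_rpow (mul_nonneg (mul_nonneg (Real.rpow_pos_of_pos hW _).le
              (norm_nonneg _)) (norm_nonneg _)) hFle hrpos.le
        _ = ((4:ℝ)^α * g x) ^ r * ‖v (t,x)‖ ^ ((1+α)*r) := by
            rw [Real.mul_rpow hann (Real.rpow_nonneg hvpos.le _), ← Real.rpow_mul hvpos.le]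
    · rw [Set.indicator_of_notMem hmem]
      exact zero_le
  -- measurability
  have hWcont : Continuous (Wgs d) := by
    have hcpos : (0:ℝ) < (d:ℝ)*((d:ℝ)-2) := by nlinarith
    have hbase : Continuous fun x : Euc d => 1 + ‖x‖^2 / ((d:ℝ)*((d:ℝ)-2)) :=
      continuous_const.add ((continuous_norm.pow 2).div_const _)
    refine hbase.rpow_const fun x => Or.inl ?_
    have h0 : (0:ℝ) ≤ ‖x‖^2 / ((d:ℝ)*((d:ℝ)-2)) := div_nonneg (by positivity) hcpos.le
    nlinarith
  have hgmeas : Measurable g := by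
    rw [hg]
    exact ((hWcont.rpow_const fun x => Or.inl (Wgs_pos hd x).ne').measurable).mul
      (measurable_fderiv ℝ (Wgs d)).norm
  have hf1meas : Measurable fun x : Euc d => ENNReal.ofReal (((4:ℝ)^α * g x) ^ r) :=
    (((Real.continuous_rpow_const hrpos.le).measurable).comp
      (hgmeas.const_mul _)).ennreal_ofReal
  -- the per-time-slice Hölder estimate
  have hmain : ∀ t : ℝ,
      (∫⁻ x : Euc d, Ω.indicator
        (fun p => ENNReal.ofReal (|Wgs d p.2 ^ (pc d - 2) * ‖fderiv ℝ (Wgs d) p.2‖ * ‖v p‖| ^ r))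
          (t, x))
      ≤ G ^ (1/P) * (B t) ^ (1/Q) := by
    intro t
    have hf2meas : Measurable fun x : Euc d => ENNReal.ofReal (‖v (t,x)‖ ^ ((1+α)*r)) :=
      (((Real.continuous_rpow_const (by positivity : (0:ℝ) ≤ (1+α)*r)).measurable).comp
        ((hv.comp measurable_prodMk_left).norm)).ennreal_ofReal
    have hf1P : (∫⁻ x : Euc d, (ENNReal.ofReal (((4:ℝ)^α * g x) ^ r)) ^ P) = G := by
      rw [hG]
      congr 1; funext x
      have hgnn : 0 ≤ g x := by
        rw [hg]
        exact mul_nonneg (Real.rpow_pos_of_pos (Wgs_pos hd x) _).le (norm_nonneg _)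
      have hann : (0:ℝ) ≤ (4:ℝ)^α * g x := mul_nonneg (by positivity) hgnn
      rw [ENNReal.ofReal_rpow_of_nonneg (Real.rpow_nonneg hann _) hPpos.le,
        ← Real.rpow_mul hann]
      congr 2
      rw [hP]
      field_simp
    have hf2Q : (∫⁻ x : Euc d, (ENNReal.ofReal (‖v (t,x)‖ ^ ((1+α)*r))) ^ Q) = B t := by
      rw [hB]
      congr 1; funext x
      rw [ENNReal.ofReal_rpow_of_nonneg (by positivity) hQpos.le,
        ← Real.rpow_mul (norm_nonneg _)]
      congr 1
      rw [hQ]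
      field_simp
    calc (∫⁻ x : Euc d, Ω.indicator
        (fun p => ENNReal.ofReal (|Wgs d p.2 ^ (pc d - 2) * ‖fderiv ℝ (Wgs d) p.2‖ * ‖v p‖| ^ r))
          (t, x))
        ≤ ∫⁻ x : Euc d, (fun x : Euc d => ENNReal.ofReal (((4:ℝ)^α * g x) ^ r)) x *
            (fun x : Euc d => ENNReal.ofReal (‖v (t,x)‖ ^ ((1+α)*r))) x :=
          lintegral_mono fun x => hpt t x
      _ ≤ (∫⁻ x : Euc d, (ENNReal.ofReal (((4:ℝ)^α * g x) ^ r)) ^ P) ^ (1/P) *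
            (∫⁻ x : Euc d, (ENNReal.ofReal (‖v (t,x)‖ ^ ((1+α)*r))) ^ Q) ^ (1/Q) :=
          ENNReal.lintegral_mul_le_Lp_mul_Lq volume hPQ hf1meas.aemeasurable hf2meas.aemeasurable
      _ = G ^ (1/P) * (B t) ^ (1/Q) := by rw [hf1P, hf2Q]
  -- clean up goal and conclude
  rw [hRHS]
  unfold mixNorm
  have hid1 : (1/P)*(2/r) = 2/s := by
    rw [hP]; field_simp
  have hid2 : (1/Q)*(2/r) = q0 d / r0 d := by
    rw [hQval, hr]
    unfold q0 r0
    field_simp [hd2.ne', hdp2.ne', hdpos.ne', hd21.ne', hd23.ne']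
  have hid3 : (2/s)*(1/2) = 1/s := by field_simp
  have hid4 : (1/(q0 d)) * ((2 * (d:ℝ) + 3) / (2 * ((d:ℝ) - 2))) = 1/2 := by
    unfold q0
    field_simp [hd2.ne', hd23.ne']
  have hGne : G ^ (2/s) ≠ ⊤ := ENNReal.rpow_ne_top_of_nonneg (by positivity) hGfin
  calc (∫⁻ t in I, (∫⁻ x : Euc d, Ω.indicator
        (fun p => ENNReal.ofReal (|Wgs d p.2 ^ (pc d - 2) * ‖fderiv ℝ (Wgs d) p.2‖ * ‖v p‖| ^ r))
          (t, x)) ^ (2/r)) ^ (1/(2:ℝ))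
      ≤ (∫⁻ t in I, (G ^ (1/P) * (B t) ^ (1/Q)) ^ (2/r)) ^ (1/(2:ℝ)) := by
        apply ENNReal.rpow_le_rpow _ (by norm_num)
        exact lintegral_mono fun t => ENNReal.rpow_le_rpow (hmain t) (by positivity)
    _ = (∫⁻ t in I, G ^ (2/s) * (B t) ^ (q0 d / r0 d)) ^ (1/(2:ℝ)) := by
        congr 1
        apply lintegral_congr
        intro t
        rw [ENNReal.mul_rpow_of_nonneg _ _ (by positivity : (0:ℝ) ≤ 2/r),
          ← ENNReal.rpow_mul, ← ENNReal.rpow_mul, hid1, hid2]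
    _ = (G ^ (2/s) * X) ^ (1/(2:ℝ)) := by rw [lintegral_const_mul' _ _ hGne, hX]
    _ = G ^ (1/s) * X ^ (1/(2:ℝ)) := by
        rw [ENNReal.mul_rpow_of_nonneg _ _ (by norm_num : (0:ℝ) ≤ 1/2),
          ← ENNReal.rpow_mul, hid3]
    _ = G ^ (1/s) * (X ^ (1/(q0 d))) ^ ((2 * (d:ℝ) + 3) / (2 * ((d:ℝ) - 2))) := by
        rw [← ENNReal.rpow_mul, hid4]
    _ ≤ ENNReal.ofReal C * (X ^ (1/(q0 d))) ^ ((2 * (d:ℝ) + 3) / (2 * ((d:ℝ) - 2))) :=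
        mul_le_mul_left hGC _
end
end
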